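/- Let f be a continuous real-valued function on a compact interval [a,b] which is neither strictly convex nor strictly concave on [a,b]. Then there exist a self-adjoint bounded operator H on the Hilbert space ℓ² (of square-summable complex sequences) and a sequence (Hₙ) of self-adjoint bounded operators on ℓ², with σ(H) ⊆ [a,b] and σ(Hₙ) ⊆ [a,b] for all n, such that (Hₙ) converges to H in the weak operator topology and (f(Hₙ)) converges to f(H) in the weak operator topology, but (Hₙ) does not converge to H in the strong operator topology. -/

import Mathlib

set_option synthInstance.maxHeartbeats 400000
set_option maxHeartbeats 800000

open scoped InnerProductSpace ENNReal
open Filter Topology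

lemma exists_mid_ge (a b : ℝ) (f : ℝ → ℝ) (hfc : ContinuousOn f (Set.Icc a b))
    (x₀ y₀ t s : ℝ) (hx₀ : x₀ ∈ Set.Icc a b) (hy₀ : y₀ ∈ Set.Icc a b) (hxy : x₀ < y₀)
    (ht : 0 < t) (hs : 0 < s) (hts : t + s = 1)
    (hch : t * f x₀ + s * f y₀ ≤ f (t * x₀ + s * y₀)) :
    ∃ u v, u ∈ Set.Icc a b ∧ v ∈ Set.Icc a b ∧ u < v ∧ (f u + f v) / 2 ≤ f ((u + v) / 2) := by
  have ht' : t = 1 - s := by linarith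
  subst ht'
  have hs1 : s < 1 := by linarith
  set c : ℝ := (f y₀ - f x₀) / (y₀ - x₀) with hc
  set h : ℝ → ℝ := fun w => f w - c * w with hh
  have hsub : Set.Icc x₀ y₀ ⊆ Set.Icc a b := Set.Icc_subset_Icc hx₀.1 hy₀.2
  have hhc : ContinuousOn h (Set.Icc x₀ y₀) :=
    (hfc.mono hsub).sub ((continuous_const.mul continuous_id).continuousOn)
  have hyx : y₀ - x₀ ≠ 0 := by linarith
  have hhx₀y₀ : h x₀ = h y₀ := by
    simp only [hh, hc]; field_simp; ring
  have hzlt1 : x₀ < (1 - s) * x₀ + s * y₀ := by nlinarith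
  have hzlt2 : (1 - s) * x₀ + s * y₀ < y₀ := by nlinarith
  have hzmem : (1 - s) * x₀ + s * y₀ ∈ Set.Icc x₀ y₀ := ⟨hzlt1.le, hzlt2.le⟩
  have hcz : c * ((1 - s) * x₀ + s * y₀) - c * x₀ = s * (f y₀ - f x₀) := by
    simp only [hc]; field_simp; ring
  have hhz : h x₀ ≤ h ((1 - s) * x₀ + s * y₀) := by
    simp only [hh]; linarith
  obtain ⟨m, hm, hmax⟩ := isCompact_Icc.exists_isMaxOn (Set.nonempty_Icc.2 hxy.le) hhc
  have hmax' : ∀ w ∈ Set.Icc x₀ y₀, h w ≤ h m := hmax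
  obtain ⟨m', hm'1, hm'2, hm'max⟩ :
      ∃ m', x₀ < m' ∧ m' < y₀ ∧ ∀ w ∈ Set.Icc x₀ y₀, h w ≤ h m' := by
    by_cases hcase : h m ≤ h ((1 - s) * x₀ + s * y₀)
    · exact ⟨_, hzlt1, hzlt2, fun w hw => le_trans (hmax' w hw) hcase⟩
    · push_neg at hcase
      have h1 : h x₀ < h m := lt_of_le_of_lt hhz hcase
      have hmx : m ≠ x₀ := fun e => by rw [e] at h1; exact lt_irrefl _ h1
      have hmy : m ≠ y₀ := fun e => by rw [e, ← hhx₀y₀] at h1; exact lt_irrefl _ h1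
      exact ⟨m, lt_of_le_of_ne hm.1 (Ne.symm hmx), lt_of_le_of_ne hm.2 hmy, hmax'⟩
  set r : ℝ := min (m' - x₀) (y₀ - m') with hr
  have hr1 := min_le_left (m' - x₀) (y₀ - m')
  have hr2 := min_le_right (m' - x₀) (y₀ - m')
  have hrpos : 0 < r := lt_min (by linarith) (by linarith)
  refine ⟨m' - r, m' + r, hsub ⟨by linarith, by linarith⟩, hsub ⟨by linarith, by linarith⟩,
    by linarith, ?_⟩
  have hu : h (m' - r) ≤ h m' := hm'max _ ⟨by linarith, by linarith⟩
  have hv : h (m' + r) ≤ h m' := hm'max _ ⟨by linarith, by linarith⟩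
  have hmid : (m' - r + (m' + r)) / 2 = m' := by ring
  rw [hmid]
  simp only [hh] at hu hv
  nlinarith

lemma exists_mid_eq (a b : ℝ) (f : ℝ → ℝ) (hfc : ContinuousOn f (Set.Icc a b))
    (hnc : ¬ StrictConvexOn ℝ (Set.Icc a b) f)
    (hncc : ¬ StrictConcaveOn ℝ (Set.Icc a b) f) :
    ∃ x y, x ∈ Set.Icc a b ∧ y ∈ Set.Icc a b ∧ x < y ∧
      f ((x + y) / 2) = (f x + f y) / 2 := by
  rw [StrictConvexOn] at hnc
  rw [StrictConcaveOn] at hncc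
  push_neg at hnc hncc
  obtain ⟨x₁, hx₁, y₁, hy₁, hne₁, t₁, s₁, ht₁, hs₁, hts₁, hch₁⟩ := hnc (convex_Icc a b)
  obtain ⟨x₂, hx₂, y₂, hy₂, hne₂, t₂, s₂, ht₂, hs₂, hts₂, hch₂⟩ := hncc (convex_Icc a b)
  simp only [smul_eq_mul] at hch₁ hch₂
  have H1 : ∃ u v, u ∈ Set.Icc a b ∧ v ∈ Set.Icc a b ∧ u < v ∧
      (f u + f v) / 2 ≤ f ((u + v) / 2) := by
    rcases lt_or_gt_of_ne hne₁ with h | h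
    · exact exists_mid_ge a b f hfc x₁ y₁ t₁ s₁ hx₁ hy₁ h ht₁ hs₁ hts₁ hch₁
    · refine exists_mid_ge a b f hfc y₁ x₁ s₁ t₁ hy₁ hx₁ h hs₁ ht₁ (by linarith) ?_
      have e1 : s₁ * y₁ + t₁ * x₁ = t₁ * x₁ + s₁ * y₁ := by ring
      rw [e1]; linarith
  have H2 : ∃ u v, u ∈ Set.Icc a b ∧ v ∈ Set.Icc a b ∧ u < v ∧
      f ((u + v) / 2) ≤ (f u + f v) / 2 := by
    have hfc' : ContinuousOn (fun w => -f w) (Set.Icc a b) := hfc.neg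
    have key : ∃ u v, u ∈ Set.Icc a b ∧ v ∈ Set.Icc a b ∧ u < v ∧
        ((fun w => -f w) u + (fun w => -f w) v) / 2 ≤ (fun w => -f w) ((u + v) / 2) := by
      rcases lt_or_gt_of_ne hne₂ with h | h
      · refine exists_mid_ge a b _ hfc' x₂ y₂ t₂ s₂ hx₂ hy₂ h ht₂ hs₂ hts₂ ?_
        show t₂ * -f x₂ + s₂ * -f y₂ ≤ -f (t₂ * x₂ + s₂ * y₂)
        linarith
      · refine exists_mid_ge a b _ hfc' y₂ x₂ s₂ t₂ hy₂ hx₂ h hs₂ ht₂ (by linarith) ?_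
        show s₂ * -f y₂ + t₂ * -f x₂ ≤ -f (s₂ * y₂ + t₂ * x₂)
        have e1 : s₂ * y₂ + t₂ * x₂ = t₂ * x₂ + s₂ * y₂ := by ring
        rw [e1]; linarith
    obtain ⟨u, v, hu, hv, huv, hle⟩ := key
    have hle' : (-f u + -f v) / 2 ≤ -f ((u + v) / 2) := hle
    exact ⟨u, v, hu, hv, huv, by linarith⟩
  obtain ⟨u₁, v₁, hu₁, hv₁, huv₁, hge⟩ := H1
  obtain ⟨u₂, v₂, hu₂, hv₂, huv₂, hle⟩ := H2
  set φ : ℝ → ℝ := fun θ =>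
    f (((1 - θ) * u₁ + θ * u₂ + ((1 - θ) * v₁ + θ * v₂)) / 2) -
      (f ((1 - θ) * u₁ + θ * u₂) + f ((1 - θ) * v₁ + θ * v₂)) / 2 with hφ
  have humem : ∀ θ ∈ Set.Icc (0:ℝ) 1, (1 - θ) * u₁ + θ * u₂ ∈ Set.Icc a b := by
    intro θ hθ; constructor <;> nlinarith [hu₁.1, hu₁.2, hu₂.1, hu₂.2, hθ.1, hθ.2]
  have hvmem : ∀ θ ∈ Set.Icc (0:ℝ) 1, (1 - θ) * v₁ + θ * v₂ ∈ Set.Icc a b := by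
    intro θ hθ; constructor <;> nlinarith [hv₁.1, hv₁.2, hv₂.1, hv₂.2, hθ.1, hθ.2]
  have hmmem : ∀ θ ∈ Set.Icc (0:ℝ) 1,
      ((1 - θ) * u₁ + θ * u₂ + ((1 - θ) * v₁ + θ * v₂)) / 2 ∈ Set.Icc a b := by
    intro θ hθ
    have h1 := humem θ hθ; have h2 := hvmem θ hθ
    constructor <;> [linarith [h1.1, h2.1]; linarith [h1.2, h2.2]]
  have hφc : ContinuousOn φ (Set.Icc (0:ℝ) 1) := by
    apply ContinuousOn.sub
    · exact hfc.comp (by fun_prop) hmmem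
    · exact (ContinuousOn.add (hfc.comp (by fun_prop) humem)
        (hfc.comp (by fun_prop) hvmem)).div_const 2
  have hφ0 : 0 ≤ φ 0 := by simp only [hφ]; norm_num; linarith
  have hφ1 : φ 1 ≤ 0 := by simp only [hφ]; norm_num; linarith
  have hIVT := intermediate_value_Icc' (by norm_num : (0:ℝ) ≤ 1) hφc
  obtain ⟨θ, hθ, hθ0⟩ := hIVT ⟨hφ1, hφ0⟩
  refine ⟨(1 - θ) * u₁ + θ * u₂, (1 - θ) * v₁ + θ * v₂, humem θ hθ, hvmem θ hθ, ?_, ?_⟩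
  · have hpos : 0 < (1 - θ) * (v₁ - u₁) + θ * (v₂ - u₂) := by
      rcases eq_or_lt_of_le hθ.2 with h | h
      · rw [h]; norm_num; linarith
      · have h1 : 0 < (1 - θ) * (v₁ - u₁) := mul_pos (by linarith) (by linarith)
        have h2 : 0 ≤ θ * (v₂ - u₂) := mul_nonneg hθ.1 (by linarith)
        linarith
    linarith
  · simp only [hφ] at hθ0; linarith

noncomputable def ee (i : ℕ) : lp (fun _ : ℕ => ℂ) 2 := lp.single 2 i 1

noncomputable def Rk (i j : ℕ) : lp (fun _ : ℕ => ℂ) 2 →L[ℂ] lp (fun _ : ℕ => ℂ) 2 :=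
  (innerSL ℂ (ee j)).smulRight (ee i)

lemma inner_ee_left (i : ℕ) (v : lp (fun _ : ℕ => ℂ) 2) : ⟪ee i, v⟫_ℂ = v i := by
  rw [ee, lp.inner_single_left]; simp

lemma inner_ee_right (i : ℕ) (v : lp (fun _ : ℕ => ℂ) 2) :
    ⟪v, ee i⟫_ℂ = (starRingEnd ℂ) (v i) := by
  rw [← inner_conj_symm, inner_ee_left]

lemma ee_apply (i j : ℕ) : (ee i : ∀ n, ℂ) j = if j = i then 1 else 0 := by
  rw [ee, lp.single_apply]; simp [Pi.single_apply]

lemma Rk_apply (i j : ℕ) (v : lp (fun _ : ℕ => ℂ) 2) : Rk i j v = v j • ee i := by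
  simp [Rk, inner_ee_left]

lemma inner_Rk (i j : ℕ) (v w : lp (fun _ : ℕ => ℂ) 2) :
    ⟪Rk i j v, w⟫_ℂ = (starRingEnd ℂ) (v j) * w i := by
  rw [Rk_apply, inner_smul_left, inner_ee_left]

lemma Rk_mul (i j k l : ℕ) :
    Rk i j * Rk k l = if j = k then Rk i l else 0 := by
  ext v
  by_cases h : j = k
  · subst h
    simp [ContinuousLinearMap.mul_apply, Rk_apply, lp.coeFn_smul, Pi.smul_apply, ee_apply]
  · simp [ContinuousLinearMap.mul_apply, Rk_apply, lp.coeFn_smul, Pi.smul_apply, ee_apply, h]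

lemma norm_ee (i : ℕ) : ‖ee i‖ = 1 := by
  have := lp.norm_single (p := 2) (E := fun _ : ℕ => ℂ) (by norm_num) i (1:ℂ)
  simpa [ee] using this

lemma isSelfAdjoint_Rk_diag (i : ℕ) : IsSelfAdjoint (Rk i i) := by
  rw [ContinuousLinearMap.isSelfAdjoint_iff_isSymmetric]
  intro v w
  simp only [ContinuousLinearMap.coe_coe]
  rw [inner_Rk, Rk_apply, inner_smul_right, inner_ee_right]
  ring

lemma isSelfAdjoint_Rk_add (i j : ℕ) : IsSelfAdjoint (Rk i j + Rk j i) := by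
  rw [ContinuousLinearMap.isSelfAdjoint_iff_isSymmetric]
  intro v w
  simp only [ContinuousLinearMap.coe_coe, ContinuousLinearMap.add_apply, inner_add_left,
    inner_add_right, inner_Rk, Rk_apply, inner_smul_left, inner_smul_right, inner_ee_left, inner_ee_right]
  ring

lemma coeff_tendsto (v : lp (fun _ : ℕ => ℂ) 2) :
    Tendsto (fun n : ℕ => (v : ∀ n, ℂ) n) atTop (𝓝 0) := by
  have hv := lp.memℓp v
  rw [memℓp_gen_iff (by norm_num : 0 < (2 : ℝ≥0∞).toReal)] at hv
  have h1 : Tendsto (fun n : ℕ => ‖(v : ∀ n, ℂ) n‖ ^ (2 : ℝ≥0∞).toReal) atTop (𝓝 0) :=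
    hv.tendsto_atTop_zero
  rw [tendsto_zero_iff_norm_tendsto_zero]
  have h2 : (fun n : ℕ => ‖(v : ∀ n, ℂ) n‖) =
      fun n => Real.sqrt (‖(v : ∀ n, ℂ) n‖ ^ (2 : ℝ≥0∞).toReal) := by
    funext n
    rw [show ((2 : ℝ≥0∞).toReal) = (2:ℝ) by norm_num]
    rw [Real.rpow_two, Real.sqrt_sq (norm_nonneg _)]
  rw [h2]
  have h3 := (Real.continuous_sqrt.tendsto 0).comp h1
  rw [Real.sqrt_zero] at h3; exact h3

lemma isUnit_aux {A : Type*} [Ring A] [Algebra ℝ A] (T : A) (c l : ℝ)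
    (hT : T * T = c • T) (h1 : l ≠ 0) (h2 : l ≠ c) : IsUnit (l • (1:A) - T) := by
  have hlc : l - c ≠ 0 := sub_ne_zero.2 h2
  have hmul : ∀ p q : ℝ,
      (l • (1:A) - T) * (p • 1 + q • T) = (l * p) • 1 + (l * q - p - q * c) • T := by
    intro p q
    simp only [sub_mul, mul_add, add_mul, mul_sub, smul_mul_assoc, mul_smul_comm,
      one_mul, mul_one, hT]
    module
  have hmul' : ∀ p q : ℝ,
      (p • 1 + q • T) * (l • (1:A) - T) = (l * p) • 1 + (l * q - p - q * c) • T := by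
    intro p q
    simp only [sub_mul, mul_add, add_mul, mul_sub, smul_mul_assoc, mul_smul_comm,
      one_mul, mul_one, hT]
    module
  have hp : l * l⁻¹ = 1 := mul_inv_cancel₀ h1
  have hq : l * (l * (l - c))⁻¹ - l⁻¹ - (l * (l - c))⁻¹ * c = 0 := by
    field_simp
    ring
  refine ⟨⟨l • (1:A) - T, l⁻¹ • 1 + (l * (l - c))⁻¹ • T, ?_, ?_⟩, rfl⟩
  · rw [hmul, hp, hq]; norm_num
  · rw [hmul', hp, hq]; norm_num

/-- **Proposition 2.10.** If `f` is continuous on `[a,b]` and neither strictly convex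
nor strictly concave, then there are a self-adjoint bounded operator `H` on `ℓ²` and a
sequence `(Hₙ)` of self-adjoint bounded operators on `ℓ²`, all with spectra in `[a,b]`,
such that `(Hₙ) → H` and `(f(Hₙ)) → f(H)` in the weak operator topology, but
`(Hₙ) ↛ H` in the strong operator topology. -/
theorem stmt_11 (a b : ℝ) (hab : a ≤ b) (f : ℝ → ℝ)
    (hfc : ContinuousOn f (Set.Icc a b))
    (hnc : ¬ StrictConvexOn ℝ (Set.Icc a b) f)
    (hncc : ¬ StrictConcaveOn ℝ (Set.Icc a b) f) :
    ∃ (H : lp (fun _ : ℕ => ℂ) 2 →L[ℂ] lp (fun _ : ℕ => ℂ) 2)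
      (Hseq : ℕ → (lp (fun _ : ℕ => ℂ) 2 →L[ℂ] lp (fun _ : ℕ => ℂ) 2)),
      IsSelfAdjoint H ∧ (∀ n, IsSelfAdjoint (Hseq n)) ∧
      spectrum ℝ H ⊆ Set.Icc a b ∧ (∀ n, spectrum ℝ (Hseq n) ⊆ Set.Icc a b) ∧
      (∀ v w, Tendsto (fun n => ⟪(Hseq n) v, w⟫_ℂ) atTop (𝓝 ⟪H v, w⟫_ℂ)) ∧
      (∀ v w, Tendsto (fun n => ⟪(cfc (instCFC := IsSelfAdjoint.instContinuousFunctionalCalculus) f (Hseq n)) v, w⟫_ℂ) atTop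
        (𝓝 ⟪(cfc (instCFC := IsSelfAdjoint.instContinuousFunctionalCalculus) f H) v, w⟫_ℂ)) ∧
      ¬ (∀ v, Tendsto (fun n => (Hseq n) v) atTop (𝓝 (H v))) := by
  letI : ContinuousFunctionalCalculus ℝ (lp (fun _ : ℕ => ℂ) 2 →L[ℂ] lp (fun _ : ℕ => ℂ) 2)
      IsSelfAdjoint := IsSelfAdjoint.instContinuousFunctionalCalculus
  letI : StarModule ℝ (lp (fun _ : ℕ => ℂ) 2 →L[ℂ] lp (fun _ : ℕ => ℂ) 2) := ⟨fun r T => by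
    rw [RCLike.real_smul_eq_coe_smul (K := ℂ), star_smul, RCLike.real_smul_eq_coe_smul (K := ℂ)]
    simp⟩
  obtain ⟨x, y, hx, hy, hxy, hmid⟩ := exists_mid_eq a b f hfc hnc hncc
  have hyx : y - x ≠ 0 := by linarith
  set d : ℝ := (y - x) / 2 with hd
  have hdpos : 0 < d := by simp only [hd]; linarith
  have inner_rsmul : ∀ (r : ℝ) (u w : lp (fun _ : ℕ => ℂ) 2),
      ⟪r • u, w⟫_ℂ = (r:ℂ) * ⟪u, w⟫_ℂ := by
    intro r u w
    rw [← algebraMap_smul ℂ r u, Complex.coe_algebraMap, inner_smul_left, Complex.conj_ofReal]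
  set α : ℝ := (f y - f x) / (y - x) with hα
  set β : ℝ := f x - α * x with hβ
  have gx : α * x + β = f x := by simp only [hβ]; ring
  have gy : α * y + β = f y := by simp only [hβ, hα]; field_simp; ring
  have gm : α * (y - d) + β = f (y - d) := by
    have h1 : y - d = (x + y) / 2 := by simp only [hd]; ring
    rw [h1, hmid]
    have : α * ((x + y) / 2) + β = ((α * x + β) + (α * y + β)) / 2 := by ring
    rw [this, gx, gy]
  set Hop : lp (fun _ : ℕ => ℂ) 2 →L[ℂ] lp (fun _ : ℕ => ℂ) 2 :=
    y • 1 - d • Rk 0 0 with hHop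
  set An : ℕ → (lp (fun _ : ℕ => ℂ) 2 →L[ℂ] lp (fun _ : ℕ => ℂ) 2) :=
    fun n => Rk 0 (n+1) + Rk (n+1) 0 - Rk 0 0 - Rk (n+1) (n+1) with hAn
  set Hn : ℕ → (lp (fun _ : ℕ => ℂ) 2 →L[ℂ] lp (fun _ : ℕ => ℂ) 2) :=
    fun n => y • 1 + d • An n with hHn
  -- self-adjointness
  have hsaH : IsSelfAdjoint Hop := by
    simp only [hHop]
    exact (IsSelfAdjoint.smul (star_trivial y) (IsSelfAdjoint.one _)).sub
      (IsSelfAdjoint.smul (star_trivial d) (isSelfAdjoint_Rk_diag 0))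
  have hsaHn : ∀ n, IsSelfAdjoint (Hn n) := by
    intro n
    have hA : IsSelfAdjoint (An n) := by
      simp only [hAn]
      exact ((isSelfAdjoint_Rk_add 0 (n+1)).sub (isSelfAdjoint_Rk_diag 0)).sub
        (isSelfAdjoint_Rk_diag (n+1))
    exact (IsSelfAdjoint.smul (star_trivial y) (IsSelfAdjoint.one _)).add (IsSelfAdjoint.smul (star_trivial d) hA)
  -- algebraic identities
  have hN0 : ∀ n : ℕ, (n+1 : ℕ) ≠ 0 := fun n => Nat.succ_ne_zero n
  have Rk00_sq : Rk 0 0 * Rk 0 0 = Rk 0 0 := by simpa using Rk_mul 0 0 0 0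
  have An_sq : ∀ n, An n * An n = (-2 : ℝ) • An n := by
    intro n
    simp only [hAn]
    simp only [add_mul, mul_add, sub_mul, mul_sub, Rk_mul, if_pos rfl,
      if_neg (hN0 n), if_neg (Ne.symm (hN0 n)), if_true]
    module
  -- spectra
  have spec_Hn : ∀ n, spectrum ℝ (Hn n) ⊆ {x, y} := by
    intro n l hl
    by_contra hm
    simp only [Set.mem_insert_iff, Set.mem_singleton_iff] at hm
    push_neg at hm
    rw [spectrum.mem_iff] at hl
    apply hl
    have e1 : algebraMap ℝ _ l - Hn n = (l - y) • (1 : lp (fun _ : ℕ => ℂ) 2 →L[ℂ] lp (fun _ : ℕ => ℂ) 2) - d • An n := by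
      simp only [Algebra.algebraMap_eq_smul_one, hHn]
      module
    rw [e1]
    have hT : (d • An n) * (d • An n) = (-2 * d) • (d • An n) := by
      rw [smul_mul_assoc, mul_smul_comm, An_sq n]
      module
    refine isUnit_aux (d • An n) (-2 * d) (l - y) hT (sub_ne_zero.2 hm.2) ?_
    intro hc
    apply hm.1
    have : x = y - 2 * d := by simp only [hd]; ring
    rw [this]; linarith
  have spec_H : spectrum ℝ Hop ⊆ {y - d, y} := by
    intro l hl
    by_contra hm
    simp only [Set.mem_insert_iff, Set.mem_singleton_iff] at hm
    push_neg at hm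
    rw [spectrum.mem_iff] at hl
    apply hl
    have e1 : algebraMap ℝ _ l - Hop = (l - y) • (1 : lp (fun _ : ℕ => ℂ) 2 →L[ℂ] lp (fun _ : ℕ => ℂ) 2) - (-d) • Rk 0 0 := by
      simp only [Algebra.algebraMap_eq_smul_one, hHop]
      module
    rw [e1]
    have hT : ((-d) • Rk 0 0) * ((-d) • Rk 0 0) = (-d) • ((-d) • Rk 0 0) := by
      rw [smul_mul_assoc, mul_smul_comm, Rk00_sq]
    refine isUnit_aux ((-d) • Rk 0 0) (-d) (l - y) hT (sub_ne_zero.2 hm.2) ?_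
    intro hc
    exact hm.1 (by linarith)
  -- cfc computations
  have cfc_affine : ∀ (T : lp (fun _ : ℕ => ℂ) 2 →L[ℂ] lp (fun _ : ℕ => ℂ) 2),
      IsSelfAdjoint T → (∀ l ∈ spectrum ℝ T, f l = α * l + β) →
      cfc f T = α • T + algebraMap ℝ _ β := by
    intro T hT hfg
    have h1 : cfc f T = cfc (fun t : ℝ => α * t + β) T := cfc_congr hfg
    have h2 : cfc (fun t : ℝ => α * t + β) T
        = cfc (fun t : ℝ => α * t) T + algebraMap ℝ _ β :=
      cfc_add_const β (fun t : ℝ => α * t) T (by fun_prop) hT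
    have h3 : cfc (fun t : ℝ => α * t) T = α • T := cfc_const_mul_id α T hT
    rw [h1, h2, h3]
  have cfc_Hn : ∀ n, cfc f (Hn n) = α • Hn n + algebraMap ℝ _ β := by
    intro n
    refine cfc_affine _ (hsaHn n) ?_
    intro l hl
    rcases spec_Hn n hl with h | h
    · subst h; exact gx.symm
    · rw [Set.mem_singleton_iff] at h; subst h; exact gy.symm
  have cfc_H : cfc f Hop = α • Hop + algebraMap ℝ _ β := by
    refine cfc_affine _ hsaH ?_
    intro l hl
    rcases spec_H hl with h | h
    · subst h; exact gm.symm
    · rw [Set.mem_singleton_iff] at h; subst h; exact gy.symm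
  -- difference formula
  have diff : ∀ n, Hn n - Hop = d • (Rk 0 (n+1) + Rk (n+1) 0 - Rk (n+1) (n+1)) := by
    intro n
    simp only [hHn, hHop, hAn]
    module
  -- WOT convergence
  have wot : ∀ v w, Tendsto (fun n => ⟪(Hn n) v, w⟫_ℂ) atTop (𝓝 ⟪Hop v, w⟫_ℂ) := by
    intro v w
    have key : ∀ n, ⟪(Hn n) v, w⟫_ℂ = ⟪Hop v, w⟫_ℂ +
        (d:ℂ) * ((starRingEnd ℂ) (v (n+1)) * w 0 + (starRingEnd ℂ) (v 0) * w (n+1)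
          - (starRingEnd ℂ) (v (n+1)) * w (n+1)) := by
      intro n
      have e1 : (Hn n) v - Hop v = (Hn n - Hop) v := by simp
      have e2 : ⟪(Hn n) v, w⟫_ℂ - ⟪Hop v, w⟫_ℂ = ⟪(Hn n - Hop) v, w⟫_ℂ := by
        rw [← inner_sub_left, e1]
      rw [diff n] at e2
      have e3 : ⟪(d • (Rk 0 (n+1) + Rk (n+1) 0 - Rk (n+1) (n+1))) v, w⟫_ℂ
          = (d:ℂ) * ((starRingEnd ℂ) (v (n+1)) * w 0 + (starRingEnd ℂ) (v 0) * w (n+1)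
            - (starRingEnd ℂ) (v (n+1)) * w (n+1)) := by
        rw [ContinuousLinearMap.smul_apply, inner_rsmul]
        rw [ContinuousLinearMap.sub_apply, ContinuousLinearMap.add_apply,
          inner_sub_left, inner_add_left, inner_Rk, inner_Rk, inner_Rk]
      rw [e3] at e2
      linear_combination e2
    simp only [key]
    have hv1 : Tendsto (fun n : ℕ => (v : ∀ i, ℂ) (n+1)) atTop (𝓝 0) :=
      (coeff_tendsto v).comp (tendsto_add_atTop_nat 1)
    have hw1 : Tendsto (fun n : ℕ => (w : ∀ i, ℂ) (n+1)) atTop (𝓝 0) :=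
      (coeff_tendsto w).comp (tendsto_add_atTop_nat 1)
    have hcv1 : Tendsto (fun n : ℕ => (starRingEnd ℂ) ((v : ∀ i, ℂ) (n+1))) atTop (𝓝 0) := by
      have := (continuous_star.tendsto (0:ℂ)).comp hv1
      simpa [Function.comp_def] using this
    have main : Tendsto (fun n : ℕ => (d:ℂ) * ((starRingEnd ℂ) (v (n+1)) * w 0
        + (starRingEnd ℂ) (v 0) * w (n+1) - (starRingEnd ℂ) (v (n+1)) * w (n+1)))
        atTop (𝓝 0) := by
      have t1 : Tendsto (fun n : ℕ => (starRingEnd ℂ) ((v : ∀ i, ℂ) (n+1)) * (w : ∀ i, ℂ) 0)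
          atTop (𝓝 0) := by
        simpa using hcv1.mul (tendsto_const_nhds :
          Tendsto (fun _ : ℕ => (w : ∀ i, ℂ) 0) atTop _)
      have t2 : Tendsto (fun n : ℕ => (starRingEnd ℂ) ((v : ∀ i, ℂ) 0) * (w : ∀ i, ℂ) (n+1))
          atTop (𝓝 0) := by
        simpa using (tendsto_const_nhds :
          Tendsto (fun _ : ℕ => (starRingEnd ℂ) ((v : ∀ i, ℂ) 0)) atTop _).mul hw1
      have t3 : Tendsto (fun n : ℕ => (starRingEnd ℂ) ((v : ∀ i, ℂ) (n+1)) * (w : ∀ i, ℂ) (n+1))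
          atTop (𝓝 0) := by
        simpa using hcv1.mul hw1
      have := ((t1.add t2).sub t3).const_mul (d:ℂ)
      simpa using this
    have final := (tendsto_const_nhds :
      Tendsto (fun _ : ℕ => ⟪Hop v, w⟫_ℂ) atTop (𝓝 ⟪Hop v, w⟫_ℂ)).add main
    simpa using final
  -- conclusion
  refine ⟨Hop, Hn, hsaH, hsaHn, ?_, ?_, wot, ?_, ?_⟩
  · intro l hl
    rcases spec_H hl with h | h
    · subst h
      constructor
      · have := hx.1; have := hy.1; simp only [hd]; linarith
      · have := hy.2; simp only [hd]; linarith
    · rw [Set.mem_singleton_iff] at h; subst h; exact hy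
  · intro n l hl
    rcases spec_Hn n hl with h | h
    · subst h; exact hx
    · rw [Set.mem_singleton_iff] at h; subst h; exact hy
  · -- cfc convergence
    intro v w
    have form : ∀ (T : lp (fun _ : ℕ => ℂ) 2 →L[ℂ] lp (fun _ : ℕ => ℂ) 2),
        ⟪(α • T + algebraMap ℝ _ β) v, w⟫_ℂ = (α:ℂ) * ⟪T v, w⟫_ℂ + (β:ℂ) * ⟪v, w⟫_ℂ := by
      intro T
      rw [ContinuousLinearMap.add_apply, inner_add_left, ContinuousLinearMap.smul_apply,
        inner_rsmul, Algebra.algebraMap_eq_smul_one,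
        ContinuousLinearMap.smul_apply, ContinuousLinearMap.one_apply, inner_rsmul]
    show Tendsto (fun n => ⟪(cfc f (Hn n)) v, w⟫_ℂ) atTop (𝓝 ⟪(cfc f Hop) v, w⟫_ℂ)
    simp only [cfc_Hn, cfc_H, form]
    exact (tendsto_const_nhds.mul (wot v w)).add tendsto_const_nhds
  · -- SOT failure
    intro hSOT
    have h1 := hSOT (ee 0)
    have h2 : Tendsto (fun n => (Hn n) (ee 0) - Hop (ee 0)) atTop (𝓝 0) := by
      have := h1.sub (tendsto_const_nhds : Tendsto (fun _ : ℕ => Hop (ee 0)) atTop (𝓝 (Hop (ee 0))))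
      simpa using this
    have h3 : ∀ n, (Hn n) (ee 0) - Hop (ee 0) = d • ee (n+1) := by
      intro n
      have e1 : (Hn n) (ee 0) - Hop (ee 0) = (Hn n - Hop) (ee 0) := by simp
      rw [e1, diff n]
      rw [ContinuousLinearMap.smul_apply, ContinuousLinearMap.sub_apply,
        ContinuousLinearMap.add_apply, Rk_apply, Rk_apply, Rk_apply,
        ee_apply, ee_apply]
      rw [if_neg (hN0 n), if_pos rfl]
      simp
    have h4 : Tendsto (fun n => ‖(Hn n) (ee 0) - Hop (ee 0)‖) atTop (𝓝 0) := by
      simpa using h2.norm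
    have h5 : ∀ n, ‖(Hn n) (ee 0) - Hop (ee 0)‖ = d := by
      intro n
      rw [h3 n, norm_smul, norm_ee]
      simp [abs_of_pos hdpos]
    simp only [h5] at h4
    have := tendsto_nhds_unique h4 tendsto_const_nhds
    linarith
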